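/- arXiv:1312.1559 — 2 statements merged into one kernel-verified Lean document; each statement's English description precedes it below -/
import Mathlib

section
/- If F is a grounded family of curves with χ(F) > 2α(β+1), where α, β ≥ 0 are natural numbers, then there is a subfamily H ⊆ F such that χ(H) > α and χ(F(u,v)) > β for any two intersecting curves u, v ∈ H with u ≺ v. -/
open Set

attribute [local instance] Classical.propDecidable

abbrev Pt : Type := ℝ × ℝ

/-- The closed upper halfplane. -/
def upperH : Set Pt := {p | 0 ≤ p.2}

/-- A curve: image of a continuous map from `[0,1]` to the plane. -/
def IsCurve (c : Set Pt) : Prop :=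
  ∃ f : ℝ → Pt, ContinuousOn f (Set.Icc 0 1) ∧ f '' Set.Icc 0 1 = c

/-- A grounded curve: contained in the upper halfplane, meeting the baseline in exactly
one point which is an endpoint of the curve. -/
def IsGroundedCurve (c : Set Pt) : Prop :=
  (∃ f : ℝ → Pt, ContinuousOn f (Set.Icc 0 1) ∧ f '' Set.Icc 0 1 = c ∧ (f 0).2 = 0) ∧
  c ⊆ upperH ∧ (∃! p : Pt, p ∈ c ∧ p.2 = 0)

/-- The (unique) point of a grounded curve on the baseline. -/
noncomputable def basepoint (c : Set Pt) : Pt :=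
  if h : ∃ p : Pt, p ∈ c ∧ p.2 = 0 then h.choose else (0, 0)

/-- A grounded family of curves. -/
def IsGrounded (F : Set (Set Pt)) : Prop :=
  F.Finite ∧ (∀ c ∈ F, IsGroundedCurve c) ∧
  ∀ c ∈ F, ∀ d ∈ F, c ≠ d → basepoint c ≠ basepoint d

/-- `prec u v` : the basepoint of `u` lies to the left of that of `v`. -/
def prec (u v : Set Pt) : Prop := (basepoint u).1 < (basepoint v).1

/-- `F(u,v)`: the curves of `F` between `u` and `v`. -/
def between (F : Set (Set Pt)) (u v : Set Pt) : Set (Set Pt) :=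
  {c | c ∈ F ∧ prec u c ∧ prec c v}

/-- A proper coloring of the intersection graph of `F` with `m` colors. -/
def Colorable (F : Set (Set Pt)) (m : ℕ) : Prop :=
  ∃ φ : Set Pt → ℕ, (∀ c ∈ F, φ c < m) ∧
    ∀ c ∈ F, ∀ d ∈ F, c ≠ d → (c ∩ d).Nonempty → φ c ≠ φ d

/-- Chromatic number of the intersection graph of `F`. -/
noncomputable def chi (F : Set (Set Pt)) : ℕ := sInf {m | Colorable F m}

/-- `ω(F) ≤ k`: every clique (set of pairwise intersecting members) has at most `k` members. -/
def cliqueLE (F : Set (Set Pt)) (k : ℕ) : Prop :=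
  ∀ K : Finset (Set Pt), ↑K ⊆ F →
    (∀ c ∈ K, ∀ d ∈ K, c ≠ d → (c ∩ d).Nonempty) → K.card ≤ k

/-- Points of `upperH \ W` whose path-component in `upperH \ W` is unbounded. -/
def extOf (W : Set Pt) : Set Pt :=
  {x | x ∈ upperH \ W ∧ ¬ Bornology.IsBounded (pathComponentIn (upperH \ W) x)}

/-- The exterior of a family of curves. -/
def extFam (F : Set (Set Pt)) : Set Pt := extOf (⋃₀ F)

/-- A chosen parametrization of a grounded curve by `[0,1]` starting at its basepoint. -/
noncomputable def param (c : Set Pt) : ℝ → Pt :=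
  if h : ∃ f : ℝ → Pt, ContinuousOn f (Set.Icc 0 1) ∧ f '' Set.Icc 0 1 = c ∧ f 0 = basepoint c
  then h.choose else fun _ => (0, 0)

/-- `t₀ = inf {t : c(t) ∈ A}` for the chosen parametrization of `c`. -/
noncomputable def firstTime (c A : Set Pt) : ℝ :=
  sInf {t | t ∈ Set.Icc (0:ℝ) 1 ∧ param c t ∈ A}

/-- The first point of `c` on `A`. -/
noncomputable def firstPoint (c A : Set Pt) : Pt := param c (firstTime c A)

/-- The portion of `c` from its basepoint up to and including its first point on `A`. -/
noncomputable def portionTo (c A : Set Pt) : Set Pt :=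
  param c '' Set.Icc 0 (firstTime c A)

/-- The portion of `c` from its basepoint strictly before its first point on `A`. -/
noncomputable def portionBefore (c A : Set Pt) : Set Pt :=
  param c '' Set.Ico 0 (firstTime c A)

/-- The initial portion of `c` up to `A`; all of `c` if `c` is disjoint from `A`. -/
noncomputable def initialPortion (c A : Set Pt) : Set Pt :=
  if (c ∩ A).Nonempty then portionTo c A else c

/-- A skeleton `(u,v,S)` in `F`. -/
def IsSkeleton (F : Set (Set Pt)) (u v : Set Pt) (S : Set (Set Pt)) : Prop :=
  u ∈ F ∧ v ∈ F ∧ prec u v ∧ (u ∩ v).Nonempty ∧ S ⊆ between F u v ∧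
  ∀ s ∈ S, ∀ s' ∈ S, s ≠ s' → s ∩ s' = ∅

/-- `P` is supported by the skeleton `(u,v,S)`. -/
def SupportedBy (F : Set (Set Pt)) (u v : Set Pt) (S P : Set (Set Pt)) : Prop :=
  P ⊆ between F u v ∧
  (∀ p ∈ P, p ∩ u = ∅ ∧ p ∩ v = ∅) ∧
  ∀ p ∈ P, ∃ s ∈ S, (p ∩ initialPortion s (u ∪ v)).Nonempty

/-- The data of a bracket: the families `P`, `S` and the selection `p ↦ s(p)`. -/
structure CBracket where
  P : Set (Set Pt)
  S : Set (Set Pt)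
  sel : Set Pt → Set Pt

/-- `(P,S)` (with selection `sel`) is a bracket in `F`. -/
def IsCBracket (F : Set (Set Pt)) (B : CBracket) : Prop :=
  B.P ⊆ F ∧ B.S ⊆ F ∧
  ((∀ p ∈ B.P, ∀ s ∈ B.S, prec p s) ∨ (∀ p ∈ B.P, ∀ s ∈ B.S, prec s p)) ∧
  (∀ p ∈ B.P, ∃ s ∈ B.S, (p ∩ s).Nonempty) ∧
  (∀ p ∈ B.P, B.sel p ∈ B.S ∧ firstPoint p (⋃₀ B.S) ∈ B.sel p) ∧
  ∀ s ∈ B.S, ∃ p ∈ B.P, firstPoint p (⋃₀ B.S) ∈ s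

/-- `I(p)`: points of `upperH` not in any unbounded path-component of
`upperH \ (p' ∪ s(p) ∪ B(p))`. -/
noncomputable def CBracket.regionOf (B : CBracket) (p : Set Pt) : Set Pt :=
  upperH \ extOf (portionBefore p (⋃₀ B.S) ∪ B.sel p ∪
    segment ℝ (basepoint p) (basepoint (B.sel p)))

/-- The interior `I` of a bracket. -/
noncomputable def CBracket.inter (B : CBracket) : Set Pt := ⋂ p ∈ B.P, B.regionOf p

/-- The exterior `E` of a bracket. -/
def CBracket.exter (B : CBracket) : Set Pt := extOf (⋃₀ (B.P ∪ B.S))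

/-- An `n`-bracket system in `F`. -/
def IsCBracketSystem (F : Set (Set Pt)) {n : ℕ} (B : Fin n → CBracket) : Prop :=
  (∀ i, IsCBracket F (B i)) ∧
  (∀ i, ∀ p ∈ (B i).P, ∀ j, i < j → p ⊆ (B j).inter) ∧
  ∀ i, ∀ s ∈ (B i).S, (s ∩ ⋂ j ∈ {j | i < j}, (B j).exter).Nonempty

/-- A clique in `F` (a finite set of pairwise intersecting curves of `F`). -/
def IsCliqueIn (F : Set (Set Pt)) (K : Finset (Set Pt)) : Prop :=
  ↑K ⊆ F ∧ ∀ c ∈ K, ∀ d ∈ K, c ≠ d → (c ∩ d).Nonempty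

/-- `ℓ(K)`: the curve of `K` with leftmost basepoint. -/
noncomputable def lcur (K : Finset (Set Pt)) : Set Pt :=
  if h : ∃ c ∈ K, ∀ d ∈ K, d ≠ c → prec c d then h.choose else ∅

/-- `r(K)`: the curve of `K` with second leftmost basepoint. -/
noncomputable def rcur (K : Finset (Set Pt)) : Set Pt :=
  if h : ∃ c ∈ K, c ≠ lcur K ∧ ∀ d ∈ K, d ≠ c → d ≠ lcur K → prec c d
  then h.choose else ∅

/-- `ℓ'(K)`: portion of `ℓ(K)` up to and including its first point on `r(K)`. -/
noncomputable def lport (K : Finset (Set Pt)) : Set Pt := portionTo (lcur K) (rcur K)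

/-- `r'(K)`: portion of `r(K)` strictly before its first point on `ℓ'(K)`. -/
noncomputable def rport (K : Finset (Set Pt)) : Set Pt := portionBefore (rcur K) (lport K)

/-- `s` is left for `K`. -/
def leftFor (K : Finset (Set Pt)) (s : Set Pt) : Prop :=
  (s ∩ lport K).Nonempty ∧ portionTo s (lport K) ∩ rport K = ∅

/-- `s` is right for `K`. -/
def rightFor (K : Finset (Set Pt)) (s : Set Pt) : Prop :=
  (s ∩ rport K).Nonempty ∧ portionTo s (rport K) ∩ lport K = ∅

/-- A `(k₁,…,kₙ)`-clique system in `F`. -/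
def IsCliqueSystem (F : Set (Set Pt)) {n : ℕ} (ks : Fin n → ℕ)
    (K : Fin n → Finset (Set Pt)) : Prop :=
  (∀ i, IsCliqueIn F (K i) ∧ (K i).card = ks i) ∧
  ∀ i j : Fin n, i < j →
    ↑(K j) ⊆ between F (lcur (K i)) (rcur (K i)) ∧
    (∀ s ∈ K j, (s ∩ (lport (K i) ∪ rport (K i))).Nonempty) ∧
    ((∀ s ∈ K j, leftFor (K i) s) ∨ (∀ s ∈ K j, rightFor (K i) s))

/-- `s` crosses the clique system `K`. -/
def Crosses (F : Set (Set Pt)) {n : ℕ} (K : Fin (n+1) → Finset (Set Pt)) (s : Set Pt) : Prop :=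
  s ∈ between F (lcur (K (Fin.last n))) (rcur (K (Fin.last n))) ∧
  (s ∩ extOf (⋃ i, ⋃₀ (↑(K i) : Set (Set Pt)))).Nonempty

/-! ### Auxiliary development for McGuinness' lemma -/

noncomputable section McGAux

/-- The x-coordinate of the basepoint. -/
def mcgKey (c : Set Pt) : ℝ := (basepoint c).1

lemma mcg_basepoint_snd {c : Set Pt} (h : IsGroundedCurve c) : (basepoint c).2 = 0 := by
  obtain ⟨-, -, p, hp, -⟩ := h
  have hex : ∃ q : Pt, q ∈ c ∧ q.2 = 0 := ⟨p, hp⟩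
  rw [basepoint, dif_pos hex]
  exact hex.choose_spec.2

lemma mcg_key_inj {F : Set (Set Pt)} (hF : IsGrounded F) {c d : Set Pt}
    (hc : c ∈ F) (hd : d ∈ F) (hne : c ≠ d) : mcgKey c ≠ mcgKey d := by
  intro h
  apply hF.2.2 c hc d hd hne
  have h1 := mcg_basepoint_snd (hF.2.1 c hc)
  have h2 := mcg_basepoint_snd (hF.2.1 d hd)
  exact Prod.ext h (h1.trans h2.symm)

/-! #### Coloring lemmas -/

lemma colorable_mono {A B : Set (Set Pt)} {m : ℕ} (hAB : A ⊆ B) (h : Colorable B m) :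
    Colorable A m := by
  obtain ⟨φ, h1, h2⟩ := h
  exact ⟨φ, fun c hc => h1 c (hAB hc),
    fun c hc d hd => h2 c (hAB hc) d (hAB hd)⟩

lemma colorable_mono_nat {A : Set (Set Pt)} {m m' : ℕ} (h : Colorable A m) (hm : m ≤ m') :
    Colorable A m' := by
  obtain ⟨φ, h1, h2⟩ := h
  exact ⟨φ, fun c hc => lt_of_lt_of_le (h1 c hc) hm, h2⟩

lemma chi_le_of_colorable {A : Set (Set Pt)} {m : ℕ} (h : Colorable A m) : chi A ≤ m :=
  Nat.sInf_le h

lemma colorable_exists {A : Set (Set Pt)} (h : A.Finite) : ∃ m, Colorable A m := by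
  refine Set.Finite.induction_on (motive := fun s _ => ∃ m, Colorable s m) A h ⟨0, fun _ => 0, by simp, by simp⟩ ?_
  intro a s has hsf ih
  · obtain ⟨m, φ, h1, h2⟩ := ih
    refine ⟨m + 1, fun c => if c = a then m else φ c, ?_, ?_⟩
    · rintro c (rfl | hc) <;> dsimp only
      · simp
      · have hca : c ≠ a := fun h => has (h ▸ hc)
        rw [if_neg hca]; exact lt_of_lt_of_le (h1 c hc) (Nat.le_succ m)
    · rintro c (rfl | hc) d (rfl | hd) hne hint <;> dsimp only
      · exact absurd rfl hne
      · have hda : d ≠ c := fun h => has (h ▸ hd)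
        rw [if_pos rfl, if_neg hda]; exact (h1 d hd).ne'
      · have hca : c ≠ d := fun h => has (h ▸ hc)
        rw [if_pos rfl, if_neg hca]; exact (h1 c hc).ne
      · have hca : c ≠ a := fun h => has (h ▸ hc)
        have hda : d ≠ a := fun h => has (h ▸ hd)
        rw [if_neg hca, if_neg hda]; exact h2 c hc d hd hne hint

lemma colorable_chi {A : Set (Set Pt)} (h : A.Finite) : Colorable A (chi A) :=
  Nat.sInf_mem (colorable_exists h)

lemma chi_mono {A B : Set (Set Pt)} (hAB : A ⊆ B) (hB : B.Finite) : chi A ≤ chi B :=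
  chi_le_of_colorable (colorable_mono hAB (colorable_chi hB))

lemma colorable_union {A B : Set (Set Pt)} {m k : ℕ}
    (hA : Colorable A m) (hB : Colorable B k) : Colorable (A ∪ B) (m + k) := by
  obtain ⟨φ, hφ1, hφ2⟩ := hA
  obtain ⟨ψ, hψ1, hψ2⟩ := hB
  refine ⟨fun c => if c ∈ A then φ c else m + ψ c, ?_, ?_⟩
  · rintro c (hc | hc) <;> dsimp only
    · rw [if_pos hc]; exact lt_of_lt_of_le (hφ1 c hc) (Nat.le_add_right _ _)
    · by_cases h : c ∈ A
      · rw [if_pos h]; exact lt_of_lt_of_le (hφ1 c h) (Nat.le_add_right _ _)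
      · rw [if_neg h]; exact Nat.add_lt_add_left (hψ1 c hc) m
  · intro c hc d hd hne hint
    dsimp only
    by_cases hcA : c ∈ A <;> by_cases hdA : d ∈ A
    · rw [if_pos hcA, if_pos hdA]; exact hφ2 c hcA d hdA hne hint
    · rw [if_pos hcA, if_neg hdA]
      have := hφ1 c hcA; omega
    · rw [if_neg hcA, if_pos hdA]
      have := hφ1 d hdA; omega
    · rw [if_neg hcA, if_neg hdA]
      have hcB : c ∈ B := hc.resolve_left hcA
      have hdB : d ∈ B := hd.resolve_left hdA
      have := hψ2 c hcB d hdB hne hint; omega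

lemma colorable_singleton (a : Set Pt) : Colorable {a} 1 :=
  ⟨fun _ => 0, by simp, by simp +contextual⟩

lemma colorable_empty (m : ℕ) : Colorable (∅ : Set (Set Pt)) m :=
  ⟨fun _ => 0, by simp, by simp⟩

lemma rep_inj {m q q' r r' : ℕ} (hr : r < m) (hr' : r' < m)
    (h : q * m + r = q' * m + r') : q = q' ∧ r = r' := by
  have hm : 0 < m := by omega
  have e1 : (q * m + r) % m = r := by rw [Nat.add_comm, Nat.add_mul_mod_self_right, Nat.mod_eq_of_lt hr]
  have e2 : (q' * m + r') % m = r' := by rw [Nat.add_comm, Nat.add_mul_mod_self_right, Nat.mod_eq_of_lt hr']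
  rw [h] at e1
  have hmod : r = r' := by rw [← e1, e2]
  subst hmod
  have hq : q * m = q' * m := Nat.add_right_cancel h
  exact ⟨Nat.eq_of_mul_eq_mul_right hm hq, rfl⟩

/-! #### Block decomposition -/

/-- The prefix of `S` up to `c` in basepoint order. -/
def mcgPre (S : Set (Set Pt)) (c : Set Pt) : Set (Set Pt) := {d ∈ S | mcgKey d ≤ mcgKey c}

/-- Candidate right endpoints for the first block. -/
def mcgCand (β : ℕ) (S : Set (Set Pt)) : Set (Set Pt) := {c ∈ S | β < chi (mcgPre S c)}

/-- The first block of `S`: the minimal prefix of chromatic number `> β`, or all of `S`. -/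
def mcgFB (β : ℕ) (S : Set (Set Pt)) : Set (Set Pt) :=
  if h : ∃ c ∈ mcgCand β S, ∀ d ∈ mcgCand β S, mcgKey c ≤ mcgKey d
  then mcgPre S h.choose else S

lemma mcgFB_subset (β : ℕ) (S : Set (Set Pt)) : mcgFB β S ⊆ S := by
  rw [mcgFB]; split_ifs with h
  · exact fun d hd => hd.1
  · exact subset_rfl

lemma mcgFB_prefix (β : ℕ) (S : Set (Set Pt)) :
    ∀ c ∈ mcgFB β S, ∀ d ∈ S \ mcgFB β S, mcgKey c < mcgKey d := by
  rw [mcgFB]; split_ifs with h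
  · intro c hc d hd
    have hd2 : ¬ mcgKey d ≤ mcgKey h.choose := fun hle => hd.2 ⟨hd.1, hle⟩
    exact lt_of_le_of_lt hc.2 (not_le.mp hd2)
  · intro c hc d hd; exact absurd hd.1 hd.2

lemma mcgFB_nonempty {β : ℕ} {S : Set (Set Pt)} (hS : S.Nonempty) : (mcgFB β S).Nonempty := by
  rw [mcgFB]; split_ifs with h
  · exact ⟨h.choose, h.choose_spec.1.1, le_refl _⟩
  · exact hS

lemma mcgFB_chi_gt {β : ℕ} {S : Set (Set Pt)} (h : (S \ mcgFB β S).Nonempty) :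
    β < chi (mcgFB β S) := by
  rw [mcgFB] at *
  split_ifs at * with hh
  · exact hh.choose_spec.1.2
  · simp at h

lemma mcgFB_chi_le {β : ℕ} {S F0 : Set (Set Pt)} (hfin : S.Finite) (hSF : S ⊆ F0)
    (hF0 : IsGrounded F0) : chi (mcgFB β S) ≤ β + 1 := by
  rw [mcgFB]; split_ifs with h
  · set c0 := h.choose with hc0
    obtain ⟨⟨hc0S, hc0chi⟩, hc0min⟩ := h.choose_spec
    set Q : Set (Set Pt) := {d ∈ S | mcgKey d < mcgKey c0} with hQdef
    have hQfin : Q.Finite := hfin.subset (fun d hd => hd.1)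
    have hQchi : chi Q ≤ β := by
      rcases Q.eq_empty_or_nonempty with hQ | hQ
      · rw [hQ]
        exact le_trans (chi_le_of_colorable (colorable_empty 0)) (Nat.zero_le β)
      · obtain ⟨c', hc'Q, hc'max⟩ := Set.exists_max_image Q mcgKey hQfin hQ
        have hQeq : Q = mcgPre S c' := by
          ext d
          constructor
          · intro hd; exact ⟨hd.1, hc'max d hd⟩
          · intro hd; exact ⟨hd.1, lt_of_le_of_lt hd.2 hc'Q.2⟩
        have hc'notcand : c' ∉ mcgCand β S := by
          intro hc'
          exact absurd (hc0min c' hc') (not_le.mpr hc'Q.2)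
        have : ¬ (β < chi (mcgPre S c')) := fun hlt => hc'notcand ⟨hc'Q.1, hlt⟩
        rw [hQeq]; omega
    have hsub : mcgPre S c0 ⊆ Q ∪ {c0} := by
      intro d hd
      by_cases hdc : d = c0
      · right; exact hdc
      · left
        refine ⟨hd.1, lt_of_le_of_ne hd.2 ?_⟩
        exact mcg_key_inj hF0 (hSF hd.1) (hSF hc0S) hdc
    have h1 : Colorable (Q ∪ {c0}) (chi Q + 1) :=
      colorable_union (colorable_chi hQfin) (colorable_singleton c0)
    calc chi (mcgPre S c0) ≤ chi (Q ∪ {c0}) :=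
          chi_mono hsub (hQfin.union (Set.finite_singleton c0))
      _ ≤ chi Q + 1 := chi_le_of_colorable h1
      _ ≤ β + 1 := by omega
  · -- no minimal candidate: `chi S ≤ β`
    by_contra hgt
    push_neg at hgt
    have hchiS : β < chi S := by omega
    apply h
    have hSne : S.Nonempty := by
      rcases S.eq_empty_or_nonempty with hS | hS
      · rw [hS] at hchiS
        have := chi_le_of_colorable (colorable_empty 0)
        omega
      · exact hS
    obtain ⟨cm, hcmS, hcmmax⟩ := Set.exists_max_image S mcgKey hfin hSne
    have hPre : mcgPre S cm = S := by
      ext d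
      exact ⟨fun hd => hd.1, fun hd => ⟨hd, hcmmax d hd⟩⟩
    have hcm : cm ∈ mcgCand β S := ⟨hcmS, by rw [hPre]; exact hchiS⟩
    have hcandfin : (mcgCand β S).Finite := hfin.subset (fun d hd => hd.1)
    exact Set.exists_min_image (mcgCand β S) mcgKey hcandfin ⟨cm, hcm⟩

/-! #### The sequence of blocks -/

/-- Iterated removal of first blocks. -/
def mcgG (β : ℕ) (F : Set (Set Pt)) : ℕ → Set (Set Pt)
  | 0 => F
  | k+1 => mcgG β F k \ mcgFB β (mcgG β F k)

/-- The `k`-th block. -/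
def mcgBlk (β : ℕ) (F : Set (Set Pt)) (k : ℕ) : Set (Set Pt) := mcgFB β (mcgG β F k)

/-- The block index of a curve. -/
def mcgIdx (β : ℕ) (F : Set (Set Pt)) (c : Set Pt) : ℕ := sInf {k | c ∉ mcgG β F (k+1)}

lemma mcgG_succ (β : ℕ) (F : Set (Set Pt)) (k : ℕ) :
    mcgG β F (k+1) = mcgG β F k \ mcgBlk β F k := rfl

lemma mcgBlk_subset (β : ℕ) (F : Set (Set Pt)) (k : ℕ) : mcgBlk β F k ⊆ mcgG β F k :=
  mcgFB_subset β _

lemma mcgG_subset (β : ℕ) (F : Set (Set Pt)) : ∀ k, mcgG β F k ⊆ F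
  | 0 => subset_rfl
  | k+1 => (Set.diff_subset).trans (mcgG_subset β F k)

lemma mcgG_antitone (β : ℕ) (F : Set (Set Pt)) {j k : ℕ} (h : j ≤ k) :
    mcgG β F k ⊆ mcgG β F j := by
  induction k, h using Nat.le_induction with
  | base => exact subset_rfl
  | succ k hk ih => exact (Set.diff_subset).trans ih

lemma mcgBlk_chi_le {β : ℕ} {F : Set (Set Pt)} (hF : IsGrounded F) (k : ℕ) :
    chi (mcgBlk β F k) ≤ β + 1 :=
  mcgFB_chi_le (hF.1.subset (mcgG_subset β F k)) (mcgG_subset β F k) hF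

lemma mcgBlk_chi_gt {β : ℕ} {F : Set (Set Pt)} {k : ℕ}
    (h : (mcgG β F (k+1)).Nonempty) : β < chi (mcgBlk β F k) :=
  mcgFB_chi_gt h

lemma mcgBlk_order {β : ℕ} {F : Set (Set Pt)} {j k : ℕ} (hjk : j < k) {c d : Set Pt}
    (hc : c ∈ mcgBlk β F j) (hd : d ∈ mcgBlk β F k) : mcgKey c < mcgKey d := by
  have hd1 : d ∈ mcgG β F (j+1) := mcgG_antitone β F hjk (mcgBlk_subset β F k hd)
  exact mcgFB_prefix β (mcgG β F j) c hc d hd1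

lemma mcgG_empty {β : ℕ} {F : Set (Set Pt)} (hF : IsGrounded F) :
    mcgG β F (F.ncard + 1) = ∅ := by
  have step : ∀ k, (mcgG β F k).Nonempty → (mcgG β F (k+1)).ncard + 1 ≤ (mcgG β F k).ncard := by
    intro k hk
    have hss : mcgG β F (k+1) ⊂ mcgG β F k := by
      obtain ⟨x, hx⟩ := mcgFB_nonempty (β := β) hk
      refine ⟨Set.diff_subset, fun hsub => ?_⟩
      have : x ∈ mcgG β F (k+1) := hsub (mcgBlk_subset β F k hx)
      exact this.2 hx
    exact Set.ncard_lt_ncard hss (hF.1.subset (mcgG_subset β F k))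
  have bound : ∀ k, (mcgG β F k).Nonempty → (mcgG β F k).ncard + k ≤ F.ncard := by
    intro k
    induction k with
    | zero => intro _; simp [mcgG]
    | succ k ih =>
      intro hk
      have hk' : (mcgG β F k).Nonempty := hk.mono Set.diff_subset
      have := ih hk'
      have := step k hk'
      omega
  by_contra h
  have hne : (mcgG β F (F.ncard + 1)).Nonempty := Set.nonempty_iff_ne_empty.mpr h
  have := bound (F.ncard + 1) hne
  omega

lemma mem_blk_idx {β : ℕ} {F : Set (Set Pt)} (hF : IsGrounded F) {c : Set Pt} (hc : c ∈ F) :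
    c ∈ mcgBlk β F (mcgIdx β F c) ∧ c ∈ mcgG β F (mcgIdx β F c) := by
  have hT : F.ncard ∈ {k | c ∉ mcgG β F (k+1)} := by
    intro hmem
    rw [mcgG_empty hF] at hmem
    exact hmem
  have h1 : c ∉ mcgG β F (mcgIdx β F c + 1) := Nat.sInf_mem ⟨F.ncard, hT⟩
  have h2 : c ∈ mcgG β F (mcgIdx β F c) := by
    rcases Nat.eq_zero_or_pos (mcgIdx β F c) with h0 | hpos
    · rw [h0]; exact hc
    · have hm : mcgIdx β F c - 1 < mcgIdx β F c := by omega
      have hnot : (mcgIdx β F c - 1) ∉ {k | c ∉ mcgG β F (k+1)} :=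
        Nat.notMem_of_lt_sInf hm
      have : c ∈ mcgG β F (mcgIdx β F c - 1 + 1) := not_not.mp hnot
      rwa [Nat.sub_add_cancel hpos] at this
  refine ⟨?_, h2⟩
  by_contra hblk
  exact h1 ⟨h2, hblk⟩


lemma mcg_r_bound {β p j : ℕ} (hp : p ≤ 1) (hj : j < β + 1) :
    p * (β + 1) + j < 2 * (β + 1) := by
  calc p * (β + 1) + j < p * (β + 1) + (β + 1) := Nat.add_lt_add_left hj _
    _ ≤ 1 * (β + 1) + (β + 1) := Nat.add_le_add_right (Nat.mul_le_mul_right _ hp) _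
    _ = 2 * (β + 1) := by ring


end McGAux

/-- McGuinness' lemma. -/
theorem mcguinness_lemma (F : Set (Set Pt)) (hF : IsGrounded F) (α β : ℕ)
    (hchi : 2 * α * (β + 1) < chi F) :
    ∃ H ⊆ F, α < chi H ∧
      ∀ u ∈ H, ∀ v ∈ H, prec u v → (u ∩ v).Nonempty →
        β < chi (between F u v) := by
  classical
  have hfin := hF.1
  -- proper (β+1)-colorings of the blocks
  have hblkcol : ∀ k, ∃ φ : Set Pt → ℕ, (∀ c ∈ mcgBlk β F k, φ c < β + 1) ∧
      ∀ c ∈ mcgBlk β F k, ∀ d ∈ mcgBlk β F k, c ≠ d → (c ∩ d).Nonempty → φ c ≠ φ d := by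
    intro k
    have h1 : (mcgBlk β F k).Finite :=
      hfin.subset ((mcgBlk_subset β F k).trans (mcgG_subset β F k))
    exact colorable_mono_nat (colorable_chi h1) (mcgBlk_chi_le hF k)
  choose Φ hΦ1 hΦ2 using hblkcol
  -- the candidate subfamilies
  set Hs : ℕ → ℕ → Set (Set Pt) :=
    fun p j => {c | c ∈ F ∧ mcgIdx β F c % 2 = p ∧ Φ (mcgIdx β F c) c = j} with hHsdef
  have main : ∃ p j, p ≤ 1 ∧ j ≤ β ∧ α < chi (Hs p j) := by
    by_contra hcon
    push_neg at hcon
    have hexist : ∀ p j, ∃ ψ : Set Pt → ℕ, p ≤ 1 → j ≤ β →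
        ((∀ c ∈ Hs p j, ψ c < α) ∧
          ∀ c ∈ Hs p j, ∀ d ∈ Hs p j, c ≠ d → (c ∩ d).Nonempty → ψ c ≠ ψ d) := by
      intro p j
      by_cases hpj : p ≤ 1 ∧ j ≤ β
      · have hHfin : (Hs p j).Finite := hfin.subset (fun c hc => hc.1)
        have hcol : Colorable (Hs p j) α :=
          colorable_mono_nat (colorable_chi hHfin) (hcon p j hpj.1 hpj.2)
        obtain ⟨ψ, a1, a2⟩ := hcol
        exact ⟨ψ, fun _ _ => ⟨a1, a2⟩⟩
      · exact ⟨fun _ => 0, fun h1 h2 => absurd ⟨h1, h2⟩ hpj⟩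
    choose ψ hψ using hexist
    have hFcol : Colorable F (2 * α * (β + 1)) := by
      refine ⟨fun c => ψ (mcgIdx β F c % 2) (Φ (mcgIdx β F c) c) c * (2 * (β + 1))
        + ((mcgIdx β F c % 2) * (β + 1) + Φ (mcgIdx β F c) c), ?_, ?_⟩
      · intro c hc
        dsimp only
        have hcblk : c ∈ mcgBlk β F (mcgIdx β F c) := (mem_blk_idx hF hc).1
        have hp : mcgIdx β F c % 2 ≤ 1 := by omega
        have hj : Φ (mcgIdx β F c) c < β + 1 := hΦ1 _ c hcblk
        have hcH : c ∈ Hs (mcgIdx β F c % 2) (Φ (mcgIdx β F c) c) := ⟨hc, rfl, rfl⟩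
        have hq : ψ (mcgIdx β F c % 2) (Φ (mcgIdx β F c) c) c < α :=
          (hψ _ _ hp (by omega)).1 c hcH
        have hrc := mcg_r_bound hp hj
        calc ψ (mcgIdx β F c % 2) (Φ (mcgIdx β F c) c) c * (2 * (β + 1))
              + ((mcgIdx β F c % 2) * (β + 1) + Φ (mcgIdx β F c) c)
            < ψ (mcgIdx β F c % 2) (Φ (mcgIdx β F c) c) c * (2 * (β + 1)) + 2 * (β + 1) :=
              Nat.add_lt_add_left hrc _
          _ = (ψ (mcgIdx β F c % 2) (Φ (mcgIdx β F c) c) c + 1) * (2 * (β + 1)) :=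
              (Nat.succ_mul _ _).symm
          _ ≤ α * (2 * (β + 1)) := Nat.mul_le_mul_right _ hq
          _ = 2 * α * (β + 1) := by ring
      · intro c hc d hd hne hint
        dsimp only
        intro heq
        have hcblk : c ∈ mcgBlk β F (mcgIdx β F c) := (mem_blk_idx hF hc).1
        have hdblk : d ∈ mcgBlk β F (mcgIdx β F d) := (mem_blk_idx hF hd).1
        have hjc : Φ (mcgIdx β F c) c < β + 1 := hΦ1 _ c hcblk
        have hjd : Φ (mcgIdx β F d) d < β + 1 := hΦ1 _ d hdblk
        have hpc : mcgIdx β F c % 2 ≤ 1 := by omega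
        have hpd : mcgIdx β F d % 2 ≤ 1 := by omega
        have hrc := mcg_r_bound hpc hjc
        have hrd := mcg_r_bound hpd hjd
        obtain ⟨hq, hr⟩ := rep_inj hrc hrd heq
        obtain ⟨hpp, hjj⟩ := rep_inj hjc hjd hr
        have hcH : c ∈ Hs (mcgIdx β F c % 2) (Φ (mcgIdx β F c) c) := ⟨hc, rfl, rfl⟩
        have hdH : d ∈ Hs (mcgIdx β F c % 2) (Φ (mcgIdx β F c) c) := ⟨hd, hpp.symm, hjj.symm⟩
        rw [← hpp, ← hjj] at hq
        exact (hψ _ _ hpc (by omega)).2 c hcH d hdH hne hint hq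
    have := chi_le_of_colorable hFcol
    omega
  obtain ⟨p, j, hp, hj, hHchi⟩ := main
  refine ⟨Hs p j, fun c hc => hc.1, hHchi, ?_⟩
  intro u hu v hv huv hint
  obtain ⟨huF, hup, huj⟩ := hu
  obtain ⟨hvF, hvp, hvj⟩ := hv
  have hkey : mcgKey u < mcgKey v := huv
  have hune : u ≠ v := by
    rintro rfl; exact lt_irrefl _ hkey
  have hub := mem_blk_idx hF (β := β) huF
  have hvb := mem_blk_idx hF (β := β) hvF
  have hkne : mcgIdx β F u ≠ mcgIdx β F v := by
    intro h
    have hvb' : v ∈ mcgBlk β F (mcgIdx β F u) := h ▸ hvb.1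
    apply hΦ2 (mcgIdx β F u) u hub.1 v hvb' hune hint
    rw [huj, h, hvj]
  have hkle : mcgIdx β F u ≤ mcgIdx β F v := by
    by_contra hlt
    push_neg at hlt
    have := mcgBlk_order hlt hvb.1 hub.1
    exact absurd hkey (by linarith)
  have h2 : mcgIdx β F u + 2 ≤ mcgIdx β F v := by
    have : mcgIdx β F u % 2 = mcgIdx β F v % 2 := by rw [hup, hvp]
    omega
  have hmid : mcgBlk β F (mcgIdx β F u + 1) ⊆ between F u v := by
    intro c hcB
    refine ⟨(mcgG_subset β F _) (mcgBlk_subset β F _ hcB), ?_, ?_⟩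
    · exact mcgBlk_order (Nat.lt_succ_self _) hub.1 hcB
    · exact mcgBlk_order (by omega) hcB hvb.1
  have hne2 : (mcgG β F (mcgIdx β F u + 1 + 1)).Nonempty :=
    ⟨v, mcgG_antitone β F (by omega) hvb.2⟩
  have hgt : β < chi (mcgBlk β F (mcgIdx β F u + 1)) := mcgBlk_chi_gt hne2
  have hle : chi (mcgBlk β F (mcgIdx β F u + 1)) ≤ chi (between F u v) :=
    chi_mono hmid (hfin.subset (fun c hc => hc.1))
  omega
end

section
/- Every grounded family of curves F with ω(F) ≥ 2 has a subfamily G ⊆ F that is externally supported in F and satisfies χ(G) ≥ χ(F)/2 (that is, 2·χ(G) ≥ χ(F)). -/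
open Set

attribute [local instance] Classical.propDecidable

/-! ### Auxiliary development for Statement 4 -/

/-- Adjacency in the intersection graph of `F`. -/
def adjIn (F : Set (Set Pt)) (c d : Set Pt) : Prop :=
  c ∈ F ∧ d ∈ F ∧ c ≠ d ∧ (c ∩ d).Nonempty

lemma adjIn.symm {F : Set (Set Pt)} {c d : Set Pt} (h : adjIn F c d) : adjIn F d c :=
  ⟨h.2.1, h.1, h.2.2.1.symm, by rw [Set.inter_comm]; exact h.2.2.2⟩

/-- Reachability by a chain of length `n` from `c₀`. -/
def reachIn (F : Set (Set Pt)) (c₀ : Set Pt) (n : ℕ) (c : Set Pt) : Prop :=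
  ∃ f : ℕ → Set Pt, f 0 = c₀ ∧ f n = c ∧ ∀ j < n, adjIn F (f j) (f (j + 1))

/-- Graph distance from `c₀`. -/
noncomputable def distIn (F : Set (Set Pt)) (c₀ c : Set Pt) : ℕ :=
  sInf {n | reachIn F c₀ n c}

lemma reachIn_self (F : Set (Set Pt)) (c₀ : Set Pt) : reachIn F c₀ 0 c₀ :=
  ⟨fun _ => c₀, rfl, rfl, fun j hj => absurd hj (Nat.not_lt_zero j)⟩

lemma reachIn_zero {F : Set (Set Pt)} {c₀ c : Set Pt} (h : reachIn F c₀ 0 c) : c = c₀ := by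
  obtain ⟨f, h0, hn, -⟩ := h; rw [← hn, h0]

lemma reachIn_mem {F : Set (Set Pt)} {c₀ c : Set Pt} {n : ℕ}
    (h0 : c₀ ∈ F) (h : reachIn F c₀ n c) : c ∈ F := by
  obtain ⟨f, hf0, hfn, hadj⟩ := h
  cases n with
  | zero => rwa [← hfn, hf0]
  | succ n => rw [← hfn]; exact (hadj n (Nat.lt_succ_self n)).2.1

lemma reachIn_succ {F : Set (Set Pt)} {c₀ c d : Set Pt} {n : ℕ}
    (h : reachIn F c₀ n c) (had : adjIn F c d) : reachIn F c₀ (n + 1) d := by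
  obtain ⟨f, hf0, hfn, hadj⟩ := h
  refine ⟨fun k => if k ≤ n then f k else d, ?_, ?_, ?_⟩
  · simp only [Nat.zero_le, if_pos]; exact hf0
  · simp only [if_neg (by omega : ¬ n + 1 ≤ n)]
  · intro j hj
    rcases Nat.lt_or_ge j n with h1 | h1
    · simp only [if_pos (le_of_lt h1), if_pos (Nat.succ_le_of_lt h1)]
      exact hadj j h1
    · have hjn : j = n := by omega
      simp only [hjn, if_pos (le_refl n), if_neg (by omega : ¬ n + 1 ≤ n), hfn]
      exact had

lemma reachIn_prefix {F : Set (Set Pt)} {c₀ : Set Pt} {n : ℕ} {f : ℕ → Set Pt}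
    (hf0 : f 0 = c₀) (hadj : ∀ j < n, adjIn F (f j) (f (j + 1))) {t : ℕ} (ht : t ≤ n) :
    reachIn F c₀ t (f t) :=
  ⟨f, hf0, rfl, fun j hj => hadj j (lt_of_lt_of_le hj ht)⟩

lemma colorable_of_finite {F : Set (Set Pt)} (h : F.Finite) : ∃ m, Colorable F m := by
  obtain ⟨n, e, he⟩ := h.fin_embedding
  refine ⟨n, fun a => if ha : ∃ i, e i = a then (ha.choose : Fin n).1 else 0, ?_, ?_⟩
  · intro c hc
    have hc' : ∃ i, e i = c := by rw [← he] at hc; exact hc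
    show (if ha : ∃ i, e i = c then (ha.choose : Fin n).1 else 0) < n
    rw [dif_pos hc']; exact hc'.choose.2
  · intro c hc d hd hne _
    have hc' : ∃ i, e i = c := by rw [← he] at hc; exact hc
    have hd' : ∃ i, e i = d := by rw [← he] at hd; exact hd
    show (if ha : ∃ i, e i = c then (ha.choose : Fin n).1 else 0) ≠
      (if ha : ∃ i, e i = d then (ha.choose : Fin n).1 else 0)
    rw [dif_pos hc', dif_pos hd']
    intro hEq
    apply hne
    have h2 : hc'.choose = hd'.choose := Fin.ext hEq
    rw [← hc'.choose_spec, ← hd'.choose_spec, h2]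

lemma chi_colorable {F : Set (Set Pt)} (h : F.Finite) : Colorable F (chi F) :=
  Nat.sInf_mem (colorable_of_finite h)

lemma chi_le {F : Set (Set Pt)} {m : ℕ} (h : Colorable F m) : chi F ≤ m := Nat.sInf_le h

lemma colorable_mono_s4 {F : Set (Set Pt)} {m m' : ℕ} (h : Colorable F m) (hmm : m ≤ m') :
    Colorable F m' := by
  obtain ⟨φ, hb, hp⟩ := h
  exact ⟨φ, fun c hc => lt_of_lt_of_le (hb c hc) hmm, hp⟩

lemma chi_pos {G : Set (Set Pt)} (hfin : G.Finite) (hne : G.Nonempty) : 1 ≤ chi G := by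
  by_contra h
  have h0 : chi G = 0 := by omega
  have hc := chi_colorable hfin
  rw [h0] at hc
  obtain ⟨φ, hb, -⟩ := hc
  obtain ⟨c, hcG⟩ := hne
  exact absurd (hb c hcG) (by omega)

lemma chi_empty : chi (∅ : Set (Set Pt)) = 0 :=
  Nat.le_zero.1 (chi_le ⟨fun _ => 0, fun c hc => absurd hc (Set.notMem_empty c),
    fun c hc => absurd hc (Set.notMem_empty c)⟩)

lemma basepoint_spec {c : Set Pt} (h : IsGroundedCurve c) :
    basepoint c ∈ c ∧ (basepoint c).2 = 0 := by
  obtain ⟨-, -, p, hp, -⟩ := h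
  have hex : ∃ q : Pt, q ∈ c ∧ q.2 = 0 := ⟨p, hp⟩
  rw [basepoint, dif_pos hex]
  exact hex.choose_spec

lemma eq_basepoint {c : Set Pt} (h : IsGroundedCurve c) {q : Pt} (hq : q ∈ c) (h0 : q.2 = 0) :
    q = basepoint c := by
  obtain ⟨p, hp, hu⟩ := h.2.2
  exact (hu q ⟨hq, h0⟩).trans (hu (basepoint c) (basepoint_spec h)).symm

lemma curve_pathConnected {c : Set Pt} (h : IsGroundedCurve c) : IsPathConnected c := by
  obtain ⟨f, hf, him, -⟩ := h.1
  rw [← him]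
  exact ((convex_Icc (0:ℝ) 1).isPathConnected
    ⟨0, Set.mem_Icc.2 ⟨le_refl 0, zero_le_one⟩⟩).image' hf

lemma isGrounded_subset {F G : Set (Set Pt)} (hF : IsGrounded F) (hGF : G ⊆ F) :
    IsGrounded G :=
  ⟨hF.1.subset hGF, fun c hc => hF.2.1 c (hGF hc),
   fun c hc d hd hne => hF.2.2 c (hGF hc) d (hGF hd) hne⟩

lemma ray_unbounded (x₀ : ℝ) :
    ¬ Bornology.IsBounded ((Set.Iic x₀ ×ˢ ({0} : Set ℝ)) : Set Pt) := by
  intro hb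
  obtain ⟨C, hC⟩ := isBounded_iff_forall_norm_le.1 hb
  have hmem : ((min x₀ (-(|C| + 1)), 0) : Pt) ∈ (Set.Iic x₀ ×ˢ ({0} : Set ℝ)) :=
    Set.mem_prod.2 ⟨Set.mem_Iic.2 (min_le_left _ _), rfl⟩
  have h1 := hC _ hmem
  have h2 : ‖(min x₀ (-(|C| + 1)) : ℝ)‖ ≤ ‖((min x₀ (-(|C| + 1)), 0) : Pt)‖ := norm_fst_le ((min x₀ (-(|C| + 1)), 0) : Pt)
  have h3 : min x₀ (-(|C| + 1)) ≤ -(|C| + 1) := min_le_right _ _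
  rw [Real.norm_eq_abs] at h2
  have h4 : |C| + 1 ≤ |min x₀ (-(|C| + 1))| := le_trans (by linarith) (neg_le_abs _)
  have h5 : C ≤ |C| := le_abs_self C
  linarith

lemma main_aux : ∀ N : ℕ, ∀ F : Set (Set Pt), IsGrounded F → F.ncard ≤ N →
    ∃ G, G ⊆ F ∧ (∀ p ∈ G, ∃ s ∈ F, (s ∩ p).Nonempty ∧ (s ∩ extFam G).Nonempty) ∧
      chi F ≤ max (2 * chi G) 1 := by
  intro N
  induction N with
  | zero =>
    intro F hF hcard
    have hFe : F = ∅ := by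
      have h0 : F.ncard = 0 := by omega
      exact (Set.ncard_eq_zero hF.1).1 h0
    subst hFe
    exact ⟨∅, Set.Subset.refl _, fun p hp => absurd hp (Set.notMem_empty p),
      by rw [chi_empty]; exact Nat.zero_le _⟩
  | succ N ih =>
    intro F hF hcard
    rcases Set.eq_empty_or_nonempty F with rfl | hFne
    · exact ⟨∅, Set.Subset.refl _, fun p hp => absurd hp (Set.notMem_empty p),
        by rw [chi_empty]; exact Nat.zero_le _⟩
    obtain ⟨c₀, hc₀F, hc₀min⟩ := Set.exists_min_image F (fun c => (basepoint c).1) hF.1 hFne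
    set R : Set (Set Pt) := {c | ∃ n, reachIn F c₀ n c} with hRdef
    have hRF : R ⊆ F := by
      intro c hc
      obtain ⟨n, hn⟩ := hc
      exact reachIn_mem hc₀F hn
    have hc₀R : c₀ ∈ R := ⟨0, reachIn_self F c₀⟩
    have hdist_reach : ∀ c ∈ R, reachIn F c₀ (distIn F c₀ c) c := fun c hc => Nat.sInf_mem hc
    have hdist_le : ∀ {n : ℕ} {c : Set Pt}, reachIn F c₀ n c → distIn F c₀ c ≤ n :=
      fun h => Nat.sInf_le h
    have hdist0 : distIn F c₀ c₀ = 0 := Nat.le_zero.1 (hdist_le (reachIn_self F c₀))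
    have hadj_R : ∀ {c d : Set Pt}, c ∈ R → adjIn F c d →
        d ∈ R ∧ distIn F c₀ d ≤ distIn F c₀ c + 1 := by
      intro c d hc had
      have h1 := reachIn_succ (hdist_reach c hc) had
      exact ⟨⟨_, h1⟩, hdist_le h1⟩
    set L : ℕ → Set (Set Pt) := fun i => {c | c ∈ R ∧ distIn F c₀ c = i} with hLdef
    have hLF : ∀ i, L i ⊆ F := fun i c hc => hRF hc.1
    have hL0 : ∀ c ∈ L 0, c = c₀ := by
      intro c hc
      have h1 : distIn F c₀ c = 0 := hc.2
      have hne : {n | reachIn F c₀ n c}.Nonempty := hc.1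
      have h0 : (0 : ℕ) ∈ {n | reachIn F c₀ n c} := by
        rcases Nat.sInf_eq_zero.1 h1 with h | h
        · exact h
        · exact absurd hne (by rw [h]; exact Set.not_nonempty_empty)
      exact reachIn_zero h0
    by_cases hchi1 : chi F ≤ 1
    · exact ⟨∅, Set.empty_subset _, fun p hp => absurd hp (Set.notMem_empty p),
        le_trans hchi1 (le_max_right _ _)⟩
    by_cases hrec : chi F ≤ chi (F \ R)
    · have hss : F \ R ⊂ F :=
        (Set.ssubset_iff_of_subset Set.diff_subset).2 ⟨c₀, hc₀F, fun h => h.2 hc₀R⟩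
      have hclt : (F \ R).ncard < F.ncard := Set.ncard_lt_ncard hss hF.1
      obtain ⟨G, hG1, hG2, hG3⟩ := ih (F \ R) (isGrounded_subset hF Set.diff_subset) (by omega)
      refine ⟨G, hG1.trans Set.diff_subset, ?_, le_trans hrec hG3⟩
      intro p hp
      obtain ⟨s, hs, h1, h2⟩ := hG2 p hp
      exact ⟨s, Set.diff_subset hs, h1, h2⟩
    by_cases hlev : ∃ i, 1 ≤ i ∧ chi F ≤ 2 * chi (L i)
    · -- the support case
      obtain ⟨i, hi1, hchiLe⟩ := hlev
      obtain ⟨k, rfl⟩ : ∃ k, i = k + 1 := ⟨i - 1, by omega⟩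
      refine ⟨L (k + 1), hLF _, ?_, le_trans hchiLe (le_max_left _ _)⟩
      intro p hp
      have hreach : reachIn F c₀ (k + 1) p := by
        have h1 := hdist_reach p hp.1
        rwa [hp.2] at h1
      obtain ⟨f, hf0, hfn, hfadj⟩ := hreach
      have hcurveF : ∀ c ∈ F, IsGroundedCurve c := hF.2.1
      set x₀ : ℝ := (basepoint c₀).1 with hx₀
      set ray : Set Pt := Set.Iic x₀ ×ˢ ({0} : Set ℝ) with hraydef
      have hbase := basepoint_spec (hcurveF c₀ hc₀F)
      have hbase_ray : basepoint c₀ ∈ ray := Set.mem_prod.2 ⟨Set.mem_Iic.2 (le_refl _), hbase.2⟩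
      have hray_pc : IsPathConnected ray :=
        ((convex_Iic x₀).prod (convex_singleton (0:ℝ))).isPathConnected ⟨_, hbase_ray⟩
      have hray_sub : ray ⊆ upperH \ ⋃₀ (L (k + 1)) := by
        intro q hq
        have hq2 : q.2 = 0 := hq.2
        refine ⟨show (0:ℝ) ≤ q.2 from le_of_eq hq2.symm, ?_⟩
        rintro ⟨d, hdL, hqd⟩
        have hdF : d ∈ F := hLF _ hdL
        have hqb : q = basepoint d := eq_basepoint (hcurveF d hdF) hqd hq2
        have h1 : x₀ ≤ (basepoint d).1 := hc₀min d hdF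
        have h2 : (basepoint d).1 ≤ x₀ := by rw [← hqb]; exact hq.1
        have hdb : basepoint d = basepoint c₀ := by
          have hx : (basepoint d).1 = (basepoint c₀).1 := le_antisymm h2 h1
          have hy : (basepoint d).2 = (basepoint c₀).2 :=
            (basepoint_spec (hcurveF d hdF)).2.trans hbase.2.symm
          exact Prod.ext hx hy
        have hdc : d = c₀ := by
          by_contra hne
          exact hF.2.2 d hdF c₀ hc₀F hne hdb
        rw [hdc] at hdL
        have h3 : distIn F c₀ c₀ = k + 1 := hdL.2
        omega
      have hray_unb := ray_unbounded x₀
      have hfF : ∀ t, t ≤ k → f t ∈ F ∧ f t ∈ R ∧ distIn F c₀ (f t) ≤ t := by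
        intro t ht
        have hr : reachIn F c₀ t (f t) := reachIn_prefix hf0 hfadj (by omega)
        exact ⟨reachIn_mem hc₀F hr, ⟨t, hr⟩, hdist_le hr⟩
      have hdisj : ∀ t, t + 1 ≤ k → ∀ z ∈ f t, z ∉ ⋃₀ (L (k + 1)) := by
        intro t ht z hz
        rintro ⟨d, hdL, hzd⟩
        obtain ⟨hfF', hfR', hfd'⟩ := hfF t (by omega)
        have hdF : d ∈ F := hLF _ hdL
        have hdd : distIn F c₀ d = k + 1 := hdL.2
        by_cases hfd : f t = d
        · rw [hfd] at hfd'; omega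
        · have had : adjIn F (f t) d := ⟨hfF', hdF, hfd, ⟨z, hz, hzd⟩⟩
          have h4 := (hadj_R hfR' had).2
          omega
      rcases Nat.eq_zero_or_pos k with hk0 | hkpos
      · subst hk0
        refine ⟨c₀, hc₀F, ?_, ?_⟩
        · have had := hfadj 0 Nat.zero_lt_one
          rw [hf0, hfn] at had
          exact had.2.2.2
        · refine ⟨basepoint c₀, hbase.1, ?_⟩
          show basepoint c₀ ∈ extOf (⋃₀ (L (0 + 1)))
          refine ⟨hray_sub hbase_ray, ?_⟩
          intro hbd
          exact hray_unb (hbd.subset (hray_pc.subset_pathComponentIn hbase_ray hray_sub))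
      · obtain ⟨j, rfl⟩ : ∃ j, k = j + 1 := ⟨k - 1, by omega⟩
        have hX : ∀ t, t ≤ j → ∃ X : Set Pt, IsPathConnected X ∧
            X ⊆ upperH \ ⋃₀ (L (j + 1 + 1)) ∧ ray ⊆ X ∧ f t ⊆ X := by
          intro t
          induction t with
          | zero =>
            intro _
            have hc₀curve := hcurveF c₀ hc₀F
            have hf0sub : f 0 ⊆ upperH \ ⋃₀ (L (j + 1 + 1)) := by
              intro z hz
              refine ⟨hc₀curve.2.1 ?_, hdisj 0 (by omega) z hz⟩
              rw [← hf0]; exact hz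
            refine ⟨ray ∪ f 0, hray_pc.union ?_ ⟨basepoint c₀, hbase_ray, ?_⟩,
              Set.union_subset hray_sub hf0sub, Set.subset_union_left, Set.subset_union_right⟩
            · rw [hf0]; exact curve_pathConnected hc₀curve
            · rw [hf0]; exact hbase.1
          | succ t iht =>
            intro ht
            obtain ⟨X, hXpc, hXsub, hXray, hXft⟩ := iht (by omega)
            have hft1F : f (t + 1) ∈ F := (hfF (t + 1) (by omega)).1
            have hcv := hcurveF _ hft1F
            have hint : (X ∩ f (t + 1)).Nonempty := by
              obtain ⟨z, hz1, hz2⟩ := (hfadj t (by omega)).2.2.2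
              exact ⟨z, hXft hz1, hz2⟩
            refine ⟨X ∪ f (t + 1), hXpc.union (curve_pathConnected hcv) hint, ?_,
              hXray.trans Set.subset_union_left, Set.subset_union_right⟩
            refine Set.union_subset hXsub ?_
            intro z hz
            exact ⟨hcv.2.1 hz, hdisj (t + 1) (by omega) z hz⟩
        obtain ⟨X, hXpc, hXsub, hXray, hXfj⟩ := hX j (le_refl j)
        have had2 := hfadj (j + 1) (by omega)
        obtain ⟨z, hz1, hz2⟩ := (hfadj j (by omega)).2.2.2
        refine ⟨f (j + 1), (hfF (j + 1) (le_refl _)).1, ?_, ?_⟩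
        · have h5 := had2.2.2.2
          rw [hfn] at h5
          exact h5
        · refine ⟨z, hz2, ?_⟩
          show z ∈ extOf (⋃₀ (L (j + 1 + 1)))
          have hzX : z ∈ X := hXfj hz1
          refine ⟨hXsub hzX, ?_⟩
          intro hbd
          exact hray_unb (hbd.subset (hXray.trans
            (hXpc.subset_pathComponentIn hzX hXsub)))
    · -- contradiction branch
      exfalso
      push_neg at hchi1 hrec hlev
      set K := chi F with hKdef
      set q := (K - 1) / 2 with hqdef
      set m := max q 1 with hmdef
      have hm1 : 1 ≤ m := le_max_right _ _
      have hcolL : ∀ i, Colorable (L i) m := by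
        intro i
        rcases Nat.eq_zero_or_pos i with h0 | hpos
        · subst h0
          exact ⟨fun _ => 0, fun c hc => hm1,
            fun c hc d hd hne _ => absurd ((hL0 c hc).trans (hL0 d hd).symm) hne⟩
        · have h1 : 2 * chi (L i) < K := hlev i hpos
          have h2 : chi (L i) ≤ q := by omega
          exact colorable_mono_s4 (chi_colorable (hF.1.subset (hLF i)))
            (le_trans h2 (le_max_left _ _))
      choose Ψ hΨb hΨp using hcolL
      have hcolR : Colorable R (2 * m) := by
        refine ⟨fun c => Ψ (distIn F c₀ c) c + m * (distIn F c₀ c % 2), ?_, ?_⟩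
        · intro c hc
          show Ψ (distIn F c₀ c) c + m * (distIn F c₀ c % 2) < 2 * m
          have hb := hΨb (distIn F c₀ c) c ⟨hc, rfl⟩
          rcases Nat.mod_two_eq_zero_or_one (distIn F c₀ c) with h | h <;> rw [h] <;> omega
        · intro c hc d hd hne hint
          show Ψ (distIn F c₀ c) c + m * (distIn F c₀ c % 2) ≠
            Ψ (distIn F c₀ d) d + m * (distIn F c₀ d % 2)
          have hcd : adjIn F c d := ⟨hRF hc, hRF hd, hne, hint⟩
          have h1 : distIn F c₀ d ≤ distIn F c₀ c + 1 := (hadj_R hc hcd).2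
          have h2 : distIn F c₀ c ≤ distIn F c₀ d + 1 := (hadj_R hd hcd.symm).2
          have hbc := hΨb (distIn F c₀ c) c ⟨hc, rfl⟩
          have hbd := hΨb (distIn F c₀ d) d ⟨hd, rfl⟩
          rcases (show distIn F c₀ d = distIn F c₀ c ∨ distIn F c₀ d = distIn F c₀ c + 1 ∨
              distIn F c₀ c = distIn F c₀ d + 1 by omega) with h | h | h
          · have hne' := hΨp (distIn F c₀ c) c ⟨hc, rfl⟩ d ⟨hd, h⟩ hne hint
            rw [h]
            intro hEq
            exact hne' (Nat.add_right_cancel hEq)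
          · rcases Nat.mod_two_eq_zero_or_one (distIn F c₀ c) with hp2 | hp2 <;>
            · have hp2' : distIn F c₀ d % 2 = 1 - distIn F c₀ c % 2 := by omega
              rw [hp2] at hp2' ⊢
              rw [hp2']
              omega
          · rcases Nat.mod_two_eq_zero_or_one (distIn F c₀ d) with hp2 | hp2 <;>
            · have hp2' : distIn F c₀ c % 2 = 1 - distIn F c₀ d % 2 := by omega
              rw [hp2] at hp2' ⊢
              rw [hp2']
              omega
      have hchiR : chi R ≤ 2 * m := chi_le hcolR
      have hcross : ∀ c d : Set Pt, c ∈ R → d ∈ F → c ≠ d → (c ∩ d).Nonempty → d ∈ R :=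
        fun c d hc hd hne hint => (hadj_R hc ⟨hRF hc, hd, hne, hint⟩).1
      have hcolF : Colorable F (max (chi R) (chi (F \ R))) := by
        obtain ⟨φ₁, hb1, hp1⟩ := chi_colorable (hF.1.subset hRF)
        obtain ⟨φ₂, hb2, hp2⟩ := chi_colorable (hF.1.subset Set.diff_subset)
        refine ⟨fun c => if c ∈ R then φ₁ c else φ₂ c, ?_, ?_⟩
        · intro c hc
          show (if c ∈ R then φ₁ c else φ₂ c) < max (chi R) (chi (F \ R))
          by_cases hcR : c ∈ R
          · rw [if_pos hcR]; exact lt_of_lt_of_le (hb1 c hcR) (le_max_left _ _)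
          · rw [if_neg hcR]; exact lt_of_lt_of_le (hb2 c ⟨hc, hcR⟩) (le_max_right _ _)
        · intro c hc d hd hne hint
          show (if c ∈ R then φ₁ c else φ₂ c) ≠ (if d ∈ R then φ₁ d else φ₂ d)
          by_cases hcR : c ∈ R <;> by_cases hdR : d ∈ R
          · rw [if_pos hcR, if_pos hdR]; exact hp1 c hcR d hdR hne hint
          · exact absurd (hcross c d hcR hd hne hint) hdR
          · exact absurd (hcross d c hdR hc hne.symm (by rwa [Set.inter_comm])) hcR
          · rw [if_neg hcR, if_neg hdR]; exact hp2 c ⟨hc, hcR⟩ d ⟨hd, hdR⟩ hne hint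
      have hKmax : K ≤ max (chi R) (chi (F \ R)) := chi_le hcolF
      have hKR : K ≤ chi R := by
        rcases le_max_iff.1 hKmax with h | h
        · exact h
        · omega
      by_cases hq0 : q = 0
      · have hL1 : L 1 = ∅ := by
          by_contra hLne
          have hne' : (L 1).Nonempty := Set.nonempty_iff_ne_empty.2 hLne
          have hpos1 := chi_pos (hF.1.subset (hLF 1)) hne'
          have h2 := hlev 1 (le_refl 1)
          omega
        have hRc₀ : ∀ c ∈ R, c = c₀ := by
          intro c hc
          by_contra hne
          have hd : distIn F c₀ c ≠ 0 := by
            intro h0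
            exact hne (hL0 c ⟨hc, h0⟩)
          obtain ⟨n, hn⟩ : ∃ n, distIn F c₀ c = n + 1 := ⟨distIn F c₀ c - 1, by omega⟩
          have hreach := hdist_reach c hc
          rw [hn] at hreach
          obtain ⟨f, hf0, hfn, hfadj⟩ := hreach
          have hr1 : reachIn F c₀ 1 (f 1) := reachIn_prefix hf0 hfadj (by omega)
          have hf1R : f 1 ∈ R := ⟨1, hr1⟩
          have hd1 : distIn F c₀ (f 1) ≤ 1 := hdist_le hr1
          rcases Nat.le_one_iff_eq_zero_or_eq_one.1 hd1 with h | h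
          · have hf1 : f 1 = c₀ := by
              have hne2 : {n' | reachIn F c₀ n' (f 1)}.Nonempty := ⟨1, hr1⟩
              rcases Nat.sInf_eq_zero.1 h with h' | h'
              · exact reachIn_zero h'
              · exact absurd hne2 (by rw [h']; exact Set.not_nonempty_empty)
            have hshort : reachIn F c₀ n c := by
              refine ⟨fun t => f (t + 1), hf1, hfn, ?_⟩
              intro t' ht'
              exact hfadj (t' + 1) (by omega)
            have h6 := hdist_le hshort
            omega
          · exact absurd (show f 1 ∈ L 1 from ⟨hf1R, h⟩)
              (by rw [hL1]; exact Set.notMem_empty _)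
        have hcolR1 : Colorable R 1 :=
          ⟨fun _ => 0, fun c hc => Nat.zero_lt_one,
            fun c hc d hd hne _ => absurd ((hRc₀ c hc).trans (hRc₀ d hd).symm) hne⟩
        have h7 := chi_le hcolR1
        omega
      · have hmq : m = q := max_eq_left (by omega)
        omega


/-- Externally supported subfamily with at least half the chromatic number. -/
theorem externally_supported_subfamily (F : Set (Set Pt)) (hF : IsGrounded F)
    (homega : ∃ u ∈ F, ∃ v ∈ F, u ≠ v ∧ (u ∩ v).Nonempty) :
    ∃ G ⊆ F, (∀ p ∈ G, ∃ s ∈ F, (s ∩ p).Nonempty ∧ (s ∩ extFam G).Nonempty) ∧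
      chi F ≤ 2 * chi G := by
  obtain ⟨G, hG1, hG2, hG3⟩ := main_aux F.ncard F hF (le_refl _)
  refine ⟨G, hG1, hG2, ?_⟩
  have h2 : 2 ≤ chi F := by
    obtain ⟨u, hu, v, hv, hne, hint⟩ := homega
    have hc := chi_colorable hF.1
    by_contra hcon
    rcases (show chi F = 0 ∨ chi F = 1 by omega) with h0 | h1
    · rw [h0] at hc
      obtain ⟨φ, hb, -⟩ := hc
      exact absurd (hb u hu) (by omega)
    · rw [h1] at hc
      obtain ⟨φ, hb, hp⟩ := hc
      have hbu := hb u hu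
      have hbv := hb v hv
      have := hp u hu v hv hne hint
      omega
  rcases le_total (2 * chi G) 1 with h | h
  · rw [max_eq_right h] at hG3
    omega
  · rw [max_eq_left h] at hG3
    exact hG3
end
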